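/- Let N be a natural number, d : Fin N → ℤ, R = ℤ[X₀, …, X_{N−1}] (MvPolynomial (Fin N) ℤ), and M = Fin N → R the free R-module of rank N with standard basis (eᵢ). Let λ : M → R be the R-linear functional with λ(eᵢ) = Xᵢ − dᵢ, and let δ be the left contraction (interior product) by λ on the exterior algebra ⋀ M (the Clifford algebra of the zero quadratic form on M), an R-linear map of square zero. Then the kernel of δ equals the sum of the range of δ and the R-submodule of ⋀ M spanned by the unit element 1; equivalently, every ω ∈ ⋀ M with δ(ω) = 0 can be written as ω = δ(η) + r·1 for some η ∈ ⋀ M and r ∈ R. -/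

import Mathlib

set_option synthInstance.maxHeartbeats 1000000
set_option maxHeartbeats 4000000
open MvPolynomial
noncomputable section
namespace KoszulAux
variable (N : ℕ) (d : Fin N → ℤ)
local notation "R" => MvPolynomial (Fin N) ℤ
local notation "Mo" => Fin N → MvPolynomial (Fin N) ℤ
local notation "E" => ExteriorAlgebra (MvPolynomial (Fin N) ℤ) (Fin N → MvPolynomial (Fin N) ℤ)

def ee (i : Fin N) : Mo := Pi.single i 1
def Yp (i : Fin N) : R := X i - C (d i)
def epsL : List (Fin N) → E
  | [] => 1
  | a :: l => ExteriorAlgebra.ι R (ee N a) * epsL l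
def epsF (S : Finset (Fin N)) : E := epsL N (S.sort (· ≤ ·))
def ctr (j : Fin N) : E →ₗ[R] E :=
  CliffordAlgebra.contractLeft (Q := (0 : QuadraticForm R Mo)) (LinearMap.proj j)
def cL : List (Fin N) → (E →ₗ[R] R)
  | [] => (ExteriorAlgebra.algebraMapInv).toLinearMap
  | a :: l => (cL l).comp (ctr N a)

@[simp] lemma epsL_nil : epsL N [] = 1 := rfl
@[simp] lemma epsL_cons (a l) : epsL N (a :: l) = ExteriorAlgebra.ι R (ee N a) * epsL N l := rfl

lemma ee_apply (i j : Fin N) : ee N i j = if j = i then 1 else 0 := by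
  simp [ee, Pi.single_apply]

lemma ctr_iota_mul (j : Fin N) (m : Mo) (x : E) :
    ctr N j (ExteriorAlgebra.ι R m * x) = m j • x - ExteriorAlgebra.ι R m * ctr N j x := by
  rw [ctr, CliffordAlgebra.contractLeft_ι_mul]; rfl

@[simp] lemma ctr_one (j : Fin N) : ctr N j (1 : E) = 0 := by
  rw [ctr, CliffordAlgebra.contractLeft_one]

lemma amInv_iota_mul (m : Mo) (x : E) :
    ExteriorAlgebra.algebraMapInv (ExteriorAlgebra.ι R m * x) = 0 := by
  rw [map_mul]
  simp [ExteriorAlgebra.algebraMapInv]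

lemma cL_iota_mul {a : Fin N} {l : List (Fin N)} (h : a ∉ l) (z : E) :
    cL N l (ExteriorAlgebra.ι R (ee N a) * z) = 0 := by
  induction l generalizing z with
  | nil => exact amInv_iota_mul N _ _
  | cons b l ih =>
    have hab : a ≠ b := fun hh => h (hh ▸ List.mem_cons_self)
    have hal : a ∉ l := fun hh => h (List.mem_cons_of_mem b hh)
    show cL N l (ctr N b (ExteriorAlgebra.ι R (ee N a) * z)) = 0
    rw [ctr_iota_mul, ee_apply, if_neg (by simpa using hab.symm), zero_smul, zero_sub, map_neg, ih hal, neg_zero]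

lemma ctr_epsL_of_not_mem {a : Fin N} {l : List (Fin N)} (h : a ∉ l) :
    ctr N a (epsL N l) = 0 := by
  induction l with
  | nil => simp
  | cons b l ih =>
    have hab : a ≠ b := fun hh => h (hh ▸ List.mem_cons_self)
    have hal : a ∉ l := fun hh => h (List.mem_cons_of_mem b hh)
    rw [epsL_cons, ctr_iota_mul, ee_apply, if_neg hab, zero_smul, zero_sub, ih hal,
      mul_zero, neg_zero]

lemma cL_epsL {l₁ l₂ : List (Fin N)} (h₁ : l₁.Pairwise (· < ·)) (h₂ : l₂.Pairwise (· < ·)) :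
    cL N l₁ (epsL N l₂) = if l₁ = l₂ then 1 else 0 := by
  induction l₁ generalizing l₂ with
  | nil =>
    cases l₂ with
    | nil => simp [cL, ExteriorAlgebra.algebraMapInv]
    | cons b m =>
      rw [if_neg (by simp)]
      exact amInv_iota_mul N _ _
  | cons a l ih =>
    have hl : l.Pairwise (· < ·) := h₁.of_cons
    cases l₂ with
    | nil =>
      show cL N l (ctr N a 1) = 0
      rw [ctr_one, map_zero]
    | cons b m =>
      have hm : m.Pairwise (· < ·) := h₂.of_cons
      show cL N l (ctr N a (ExteriorAlgebra.ι R (ee N b) * epsL N m)) = _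
      rw [ctr_iota_mul, ee_apply, map_sub, map_smul]
      rcases eq_or_ne a b with rfl | hab
      · have hal : a ∉ l := fun hh => lt_irrefl a (List.rel_of_pairwise_cons h₁ hh)
        rw [if_pos rfl, one_smul, cL_iota_mul N hal, sub_zero, ih hl hm]
        by_cases h : l = m
        · subst h; simp
        · rw [if_neg h, if_neg (by simpa using h)]
      · rw [if_neg hab, zero_smul, zero_sub, if_neg (by simp [hab]), neg_eq_zero]
        by_cases hbl : b ∈ l
        · have hab' : a < b := List.rel_of_pairwise_cons h₁ hbl
          have ham : a ∉ m := fun hh => absurd (hab'.trans (List.rel_of_pairwise_cons h₂ hh)) (lt_irrefl a)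
          rw [ctr_epsL_of_not_mem N ham, mul_zero, map_zero]
        · rw [cL_iota_mul N hbl]

lemma sort_min' {S : Finset (Fin N)} (h : S.Nonempty) :
    S.sort (· ≤ ·) = S.min' h :: ((S.erase (S.min' h)).sort (· ≤ ·)) := by
  conv_lhs => rw [← Finset.insert_erase (S.min'_mem h)]
  refine Finset.sort_insert _ (fun b hb => ?_) (Finset.notMem_erase _ _)
  exact S.min'_le b (Finset.mem_of_mem_erase hb)

@[simp] lemma epsF_empty : epsF N ∅ = 1 := by simp [epsF]

lemma epsF_insert {i : Fin N} {S : Finset (Fin N)} (h1 : i ∉ S) (h2 : ∀ b ∈ S, i < b) :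
    epsF N (insert i S) = ExteriorAlgebra.ι R (ee N i) * epsF N S := by
  unfold epsF
  rw [Finset.sort_insert _ (fun b hb => (h2 b hb).le) h1]
  rfl

lemma sort_injective : Function.Injective (fun S : Finset (Fin N) => S.sort (· ≤ ·)) := by
  intro S T h
  have : S.1 = T.1 := by
    rw [← Finset.sort_eq S (· ≤ ·), ← Finset.sort_eq T (· ≤ ·)]
    exact congrArg _ h
  exact Finset.val_injective this

def cF (S : Finset (Fin N)) : E →ₗ[R] R := cL N (S.sort (· ≤ ·))

lemma cF_epsF (S T : Finset (Fin N)) : cF N S (epsF N T) = if S = T then 1 else 0 := by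
  rw [cF, epsF, cL_epsL N ((Finset.sortedLT_sort S).pairwise) ((Finset.sortedLT_sort T).pairwise)]
  by_cases h : S = T
  · rw [if_pos h, if_pos (by rw [h])]
  · rw [if_neg h, if_neg (fun hh => h (sort_injective N hh))]

section Dl

def Dl (lam : Module.Dual R Mo) : E →ₗ[R] E :=
  CliffordAlgebra.contractLeft (Q := (0 : QuadraticForm R Mo)) lam

lemma Dl_iota_mul (lam : Module.Dual R Mo) (m : Mo) (x : E) :
    Dl N lam (ExteriorAlgebra.ι R m * x) = lam m • x - ExteriorAlgebra.ι R m * Dl N lam x := by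
  rw [Dl, CliffordAlgebra.contractLeft_ι_mul]

@[simp] lemma Dl_one (lam : Module.Dual R Mo) : Dl N lam (1 : E) = 0 := by
  rw [Dl, CliffordAlgebra.contractLeft_one]

def sgn (j : Fin N) (S : Finset (Fin N)) : ℤ := (-1) ^ ((S.filter (· < j)).card)

lemma Dl_epsF (lam : Module.Dual R Mo)
    (hlam : ∀ i : Fin N, lam (Pi.single i 1) = (X i : R) - C (d i)) (S : Finset (Fin N)) :
    Dl N lam (epsF N S) = ∑ j ∈ S, sgn N j S • (Yp N d j • epsF N (S.erase j)) := by
  induction S using Finset.strongInductionOn with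
  | _ S ih =>
    rcases S.eq_empty_or_nonempty with rfl | h
    · simp
    · set m := S.min' h with hm
      have hsort := sort_min' N h
      have hepsS : epsF N S = ExteriorAlgebra.ι R (ee N m) * epsF N (S.erase m) := by
        rw [epsF, hsort]; rfl
      have hlamm : lam (ee N m) = Yp N d m := by rw [ee, hlam m, Yp]
      rw [hepsS, Dl_iota_mul, hlamm, ih (S.erase m) (Finset.erase_ssubset (S.min'_mem h)),
        Finset.mul_sum]
      rw [← Finset.add_sum_erase _ _ (S.min'_mem h), sub_eq_add_neg, ← Finset.sum_neg_distrib]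
      have hsgn1 : sgn N m S = 1 := by
        have he : S.filter (· < m) = ∅ :=
          Finset.filter_eq_empty_iff.2 (fun x hx => not_lt.2 (S.min'_le x hx))
        rw [sgn, he]; simp
      congr 1
      · rw [hsgn1, one_smul]
      · refine Finset.sum_congr rfl (fun j hj => ?_)
        have hjS : j ∈ S := Finset.mem_of_mem_erase hj
        have hjm : j ≠ m := Finset.ne_of_mem_erase hj
        have hmj : m < j := lt_of_le_of_ne (S.min'_le j hjS) (Ne.symm hjm)
        have hmem : m ∈ S.erase j := Finset.mem_erase.2 ⟨hjm.symm, S.min'_mem h⟩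
        have hins : ExteriorAlgebra.ι R (ee N m) * epsF N ((S.erase m).erase j)
            = epsF N (S.erase j) := by
          rw [Finset.erase_right_comm, ← epsF_insert N (Finset.notMem_erase _ _)
            (fun b hb => ?_), Finset.insert_erase hmem]
          · exact lt_of_le_of_ne (S.min'_le b (Finset.mem_of_mem_erase (Finset.mem_of_mem_erase hb)))
              (Ne.symm (Finset.ne_of_mem_erase hb))
        have hsgn : sgn N j S = -sgn N j (S.erase m) := by
          have hset : S.filter (· < j) = insert m ((S.erase m).filter (· < j)) := by
            ext x
            simp only [Finset.mem_filter, Finset.mem_insert, Finset.mem_erase]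
            constructor
            · rintro ⟨hxS, hxj⟩
              rcases eq_or_ne x m with rfl | hxm
              · exact Or.inl rfl
              · exact Or.inr ⟨⟨hxm, hxS⟩, hxj⟩
            · rintro (rfl | ⟨⟨hxm, hxS⟩, hxj⟩)
              · exact ⟨S.min'_mem h, hmj⟩
              · exact ⟨hxS, hxj⟩
          have hnotmem : m ∉ (S.erase m).filter (· < j) := by
            simp [Finset.mem_filter]
          rw [sgn, sgn, hset, Finset.card_insert_of_notMem hnotmem, pow_succ]
          ring
        rw [hsgn, mul_smul_comm, mul_smul_comm, hins, neg_smul]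
  end Dl

def Sp : Submodule R E := Submodule.span R (Set.range (epsF N))

lemma epsL_sorted_eq {l : List (Fin N)} (hl : l.Pairwise (· < ·)) :
    epsL N l = epsF N l.toFinset := by
  rw [epsF, (List.toFinset_sort _ hl.nodup).2 (hl.imp le_of_lt)]

lemma epsF_mem_Sp (S : Finset (Fin N)) : epsF N S ∈ Sp N := Submodule.subset_span ⟨S, rfl⟩

lemma iota_swap (x y : Mo) :
    ExteriorAlgebra.ι R x * ExteriorAlgebra.ι R y
      = -(ExteriorAlgebra.ι R y * ExteriorAlgebra.ι R x) :=
  eq_neg_of_add_eq_zero_left (ExteriorAlgebra.ι_add_mul_swap x y)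

lemma insert_aux {l : List (Fin N)} (hl : l.Pairwise (· < ·)) (a : Fin N) :
    ∃ (c : ℤ) (m : List (Fin N)), m.Pairwise (· < ·) ∧ (∀ x ∈ m, x = a ∨ x ∈ l) ∧
      ExteriorAlgebra.ι R (ee N a) * epsL N l = c • epsL N m := by
  induction l with
  | nil =>
    exact ⟨1, [a], List.pairwise_singleton _ a, by simp, by simp⟩
  | cons b l ih =>
    rcases lt_trichotomy a b with hab | rfl | hba
    · refine ⟨1, a :: b :: l, ?_, ?_, by simp⟩
      · refine List.pairwise_cons.2 ⟨fun x hx => ?_, hl⟩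
        rcases List.mem_cons.1 hx with rfl | h
        · exact hab
        · exact hab.trans (List.rel_of_pairwise_cons hl h)
      · intro x hx
        rcases List.mem_cons.1 hx with rfl | h
        · exact Or.inl rfl
        · exact Or.inr h
    · refine ⟨0, [], List.Pairwise.nil, by simp, ?_⟩
      rw [epsL_cons, ← mul_assoc, ExteriorAlgebra.ι_sq_zero, zero_mul, zero_smul]
    · obtain ⟨c, m, hm, hsub, heq⟩ := ih hl.of_cons
      refine ⟨-c, b :: m, ?_, ?_, ?_⟩
      · refine List.pairwise_cons.2 ⟨fun x hx => ?_, hm⟩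
        rcases hsub x hx with rfl | hx'
        · exact hba
        · exact List.rel_of_pairwise_cons hl hx'
      · intro x hx
        rcases List.mem_cons.1 hx with rfl | hx'
        · exact Or.inr (List.mem_cons_self)
        · rcases hsub x hx' with rfl | h'
          · exact Or.inl rfl
          · exact Or.inr (List.mem_cons_of_mem _ h')
      · rw [epsL_cons, ← mul_assoc, iota_swap, neg_mul, mul_assoc, heq, epsL_cons,
          mul_smul_comm, neg_smul]

lemma iota_e_mul_mem (a : Fin N) {x : E} (hx : x ∈ Sp N) :
    ExteriorAlgebra.ι R (ee N a) * x ∈ Sp N := by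
  induction hx using Submodule.span_induction with
  | mem y hy =>
    obtain ⟨S, rfl⟩ := hy
    obtain ⟨c, m, hm, -, heq⟩ := insert_aux N ((Finset.sortedLT_sort S).pairwise) a
    rw [show epsF N S = epsL N (S.sort (· ≤ ·)) from rfl, heq, epsL_sorted_eq N hm]
    exact Submodule.smul_mem _ _ (epsF_mem_Sp N _)
  | zero => rw [mul_zero]; exact Submodule.zero_mem _
  | add y z _ _ hy hz => rw [mul_add]; exact Submodule.add_mem _ hy hz
  | smul r y _ hy => rw [mul_smul_comm]; exact Submodule.smul_mem _ _ hy

lemma iota_mul_mem (mo : Mo) {x : E} (hx : x ∈ Sp N) :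
    ExteriorAlgebra.ι R mo * x ∈ Sp N := by
  have hmo : mo = ∑ i : Fin N, mo i • ee N i := by
    funext j
    rw [Finset.sum_apply]
    simp [ee, Pi.single_apply]
  rw [hmo, map_sum, Finset.sum_mul]
  refine Submodule.sum_mem _ (fun i _ => ?_)
  rw [map_smul, smul_mul_assoc]
  exact Submodule.smul_mem _ _ (iota_e_mul_mem N i hx)

lemma epsL_mul_mem (l : List (Fin N)) {y : E} (hy : y ∈ Sp N) : epsL N l * y ∈ Sp N := by
  induction l with
  | nil => rw [epsL_nil, one_mul]; exact hy
  | cons a l ih => rw [epsL_cons, mul_assoc]; exact iota_e_mul_mem N a ih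

lemma mul_mem_Sp {x y : E} (hx : x ∈ Sp N) (hy : y ∈ Sp N) : x * y ∈ Sp N := by
  induction hx using Submodule.span_induction with
  | mem z hz => obtain ⟨S, rfl⟩ := hz; exact epsL_mul_mem N _ hy
  | zero => rw [zero_mul]; exact Submodule.zero_mem _
  | add z w _ _ hz hw => rw [add_mul]; exact Submodule.add_mem _ hz hw
  | smul r z _ hz => rw [smul_mul_assoc]; exact Submodule.smul_mem _ _ hz

lemma Sp_top : Sp N = ⊤ := by
  rw [Submodule.eq_top_iff']
  intro x
  induction x using CliffordAlgebra.induction with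
  | algebraMap r =>
    rw [Algebra.algebraMap_eq_smul_one]
    exact Submodule.smul_mem _ _ (by simpa using epsF_mem_Sp N ∅)
  | ι m =>
    have : ExteriorAlgebra.ι R m * 1 ∈ Sp N :=
      iota_mul_mem N m (by simpa using epsF_mem_Sp N ∅)
    simpa using this
  | mul a b ha hb => exact mul_mem_Sp N ha hb
  | add a b ha hb => exact Submodule.add_mem _ ha hb

def Phi : (Finset (Fin N) → R) →ₗ[R] E :=
  ∑ S : Finset (Fin N), (LinearMap.proj S).smulRight (epsF N S)

lemma Phi_apply (f : Finset (Fin N) → R) : Phi N f = ∑ S : Finset (Fin N), f S • epsF N S := by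
  simp [Phi]

lemma Phi_single (S : Finset (Fin N)) (r : R) : Phi N (Pi.single S r) = r • epsF N S := by
  rw [Phi_apply]
  rw [Finset.sum_eq_single S (fun T _ hT => by rw [Pi.single_apply, if_neg hT, zero_smul])
    (fun h => absurd (Finset.mem_univ S) h)]
  rw [Pi.single_apply, if_pos rfl]

def Psi : E →ₗ[R] (Finset (Fin N) → R) := LinearMap.pi (cF N)

lemma Psi_Phi (f : Finset (Fin N) → R) : Psi N (Phi N f) = f := by
  funext S
  show cF N S (Phi N f) = f S
  rw [Phi_apply, map_sum]
  rw [Finset.sum_congr rfl (fun T (_ : T ∈ Finset.univ) => by rw [map_smul, cF_epsF])]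
  simp [Finset.sum_ite_eq]


lemma Phi_inj : Function.Injective (Phi N) := fun f g h => by
  have h2 := congrArg (Psi N) h
  rwa [Psi_Phi, Psi_Phi] at h2

lemma Phi_surj : Function.Surjective (Phi N) := by
  intro x
  have hx : x ∈ Sp N := by rw [Sp_top]; trivial
  have hle : Sp N ≤ LinearMap.range (Phi N) := by
    rw [Sp, Submodule.span_le]
    rintro y ⟨S, rfl⟩
    exact ⟨Pi.single S 1, by rw [Phi_single, one_smul]⟩
  obtain ⟨f, hf⟩ := hle hx
  exact ⟨f, hf⟩

def PhiE : (Finset (Fin N) → R) ≃ₗ[R] E :=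
  LinearEquiv.ofBijective (Phi N) ⟨Phi_inj N, Phi_surj N⟩

def shiftEquiv : R ≃ₐ[ℤ] R :=
  AlgEquiv.ofAlgHom (MvPolynomial.aeval (fun i => X i - C (d i)))
    (MvPolynomial.aeval (fun i => X i + C (d i)))
    (by apply MvPolynomial.algHom_ext; intro i; simp)
    (by apply MvPolynomial.algHom_ext; intro i; simp)

def Ypow (α : Fin N →₀ ℕ) : R := α.prod fun i k => (Yp N d i) ^ k

@[simp] lemma Ypow_zero : Ypow N d 0 = 1 := Finsupp.prod_zero_index

lemma Ypow_add (α β : Fin N →₀ ℕ) : Ypow N d (α + β) = Ypow N d α * Ypow N d β :=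
  Finsupp.prod_add_index' (fun _ => pow_zero _) (fun a b₁ b₂ => pow_add _ b₁ b₂)

lemma Ypow_single (j : Fin N) : Ypow N d (Finsupp.single j 1) = Yp N d j := by
  rw [Ypow, show ((Finsupp.single j 1).prod fun i k => Yp N d i ^ k) = Yp N d j ^ 1 from
    Finsupp.prod_single_index (pow_zero _), pow_one]

def basisY : Module.Basis (Fin N →₀ ℕ) ℤ R :=
  (MvPolynomial.basisMonomials (Fin N) ℤ).map (shiftEquiv N d).toLinearEquiv

lemma basisY_apply (α : Fin N →₀ ℕ) : basisY N d α = Ypow N d α := by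
  rw [basisY, Module.Basis.map_apply]
  have h1 : (MvPolynomial.basisMonomials (Fin N) ℤ) α = monomial α 1 := by
    rw [MvPolynomial.coe_basisMonomials]
  rw [h1]
  show MvPolynomial.aeval (fun i => X i - C (d i)) (monomial α (1 : ℤ)) = Ypow N d α
  rw [MvPolynomial.aeval_monomial]
  simp only [map_one, one_mul]
  rfl

def basisE : Module.Basis ((_ : Finset (Fin N)) × (Fin N →₀ ℕ)) ℤ E :=
  (Pi.basis (fun _ : Finset (Fin N) => basisY N d)).map ((PhiE N).restrictScalars ℤ)

lemma basisE_apply (S : Finset (Fin N)) (α : Fin N →₀ ℕ) :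
    basisE N d ⟨S, α⟩ = Ypow N d α • epsF N S := by
  rw [basisE, Module.Basis.map_apply, Pi.basis_apply]
  show Phi N (Pi.single S (basisY N d α)) = _
  rw [basisY_apply, Phi_single]


lemma min'_eq (T : Finset (Fin N)) (h : T.Nonempty) (i : Fin N) (hi : i ∈ T)
    (hall : ∀ x ∈ T, i ≤ x) : T.min' h = i :=
  le_antisymm (Finset.min'_le T i hi) (Finset.le_min' T h i hall)

lemma sub_add_single {α : Fin N →₀ ℕ} {i : Fin N} (h : α i ≠ 0) :
    α - Finsupp.single i 1 + Finsupp.single i 1 = α := by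
  ext a
  simp only [Finsupp.add_apply, Finsupp.tsub_apply, Finsupp.single_apply]
  split_ifs with hia
  · subst hia; omega
  · omega

lemma add_sub_single (α : Fin N →₀ ℕ) (i : Fin N) :
    α + Finsupp.single i 1 - Finsupp.single i 1 = α := by
  ext a
  simp only [Finsupp.add_apply, Finsupp.tsub_apply, Finsupp.single_apply]
  split_ifs <;> omega

lemma add_sub_comm' {i j : Fin N} (hij : i ≠ j) (α : Fin N →₀ ℕ) :
    α + Finsupp.single j 1 - Finsupp.single i 1
      = α - Finsupp.single i 1 + Finsupp.single j 1 := by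
  ext a
  simp only [Finsupp.add_apply, Finsupp.tsub_apply, Finsupp.single_apply]
  rcases eq_or_ne j a with rfl | hja
  · rw [if_neg hij]; simp
  · split_ifs <;> omega

lemma support_add_single_subset (α : Fin N →₀ ℕ) (j : Fin N) :
    (α + Finsupp.single j 1).support ⊆ α.support ∪ {j} :=
  subset_trans Finsupp.support_add
    (Finset.union_subset_union (subset_refl _) Finsupp.support_single_subset)

lemma sgn_eq_one {i : Fin N} {S : Finset (Fin N)} (hall : ∀ x ∈ S, ¬x < i) :
    sgn N i S = 1 := by
  rw [sgn, Finset.filter_eq_empty_iff.2 hall]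
  simp

lemma sgn_insert {i j : Fin N} {S : Finset (Fin N)} (hiS : i ∉ S) (hij : i < j) :
    sgn N j (insert i S) = -sgn N j S := by
  have hset : (insert i S).filter (· < j) = insert i (S.filter (· < j)) := by
    ext x
    simp only [Finset.mem_filter, Finset.mem_insert]
    constructor
    · rintro ⟨rfl | hx, hlt⟩
      · exact Or.inl rfl
      · exact Or.inr ⟨hx, hlt⟩
    · rintro (rfl | ⟨hx, hlt⟩)
      · exact ⟨Or.inl rfl, hij⟩
      · exact ⟨Or.inr hx, hlt⟩
  have hnm : i ∉ S.filter (· < j) := fun hh => hiS (Finset.mem_of_mem_filter _ hh)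
  rw [sgn, sgn, hset, Finset.card_insert_of_notMem hnm, pow_succ]
  ring

def valH (p : (_ : Finset (Fin N)) × (Fin N →₀ ℕ)) : E :=
  if h : (p.2.support ∪ p.1).Nonempty then
    (if (p.2.support ∪ p.1).min' h ∈ p.1 then 0
     else Ypow N d (p.2 - Finsupp.single ((p.2.support ∪ p.1).min' h) 1) •
       epsF N (insert ((p.2.support ∪ p.1).min' h) p.1))
  else 0

lemma valH_of_min_notmem {S : Finset (Fin N)} {α : Fin N →₀ ℕ} {i : Fin N}
    (hi : i ∈ α.support ∪ S) (hall : ∀ x ∈ α.support ∪ S, i ≤ x) (hiS : i ∉ S) :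
    valH N d ⟨S, α⟩
      = Ypow N d (α - Finsupp.single i 1) • epsF N (insert i S) := by
  have hne : (α.support ∪ S).Nonempty := ⟨i, hi⟩
  have hmin : (α.support ∪ S).min' hne = i := min'_eq N _ hne i hi hall
  rw [valH]
  rw [dif_pos hne, hmin, if_neg hiS]

lemma valH_of_min_mem {S : Finset (Fin N)} {α : Fin N →₀ ℕ} {i : Fin N}
    (hi : i ∈ α.support ∪ S) (hall : ∀ x ∈ α.support ∪ S, i ≤ x) (hiS : i ∈ S) :
    valH N d ⟨S, α⟩ = 0 := by
  have hne : (α.support ∪ S).Nonempty := ⟨i, hi⟩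
  have hmin : (α.support ∪ S).min' hne = i := min'_eq N _ hne i hi hall
  rw [valH]
  rw [dif_pos hne, hmin, if_pos hiS]

lemma valH_of_empty {S : Finset (Fin N)} {α : Fin N →₀ ℕ}
    (h : ¬(α.support ∪ S).Nonempty) : valH N d ⟨S, α⟩ = 0 := by
  rw [valH, dif_neg h]

def Hh : E →ₗ[ℤ] E := (basisE N d).constr ℤ (valH N d)

lemma Hh_basis (p : (_ : Finset (Fin N)) × (Fin N →₀ ℕ)) :
    Hh N d (basisE N d p) = valH N d p :=
  Module.Basis.constr_basis _ _ _ _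

def Pi1 : E →ₗ[ℤ] E :=
  (LinearMap.toSpanSingleton ℤ E (1 : E)).comp ((basisE N d).coord ⟨∅, 0⟩)

lemma Pi1_basis (p : (_ : Finset (Fin N)) × (Fin N →₀ ℕ)) :
    Pi1 N d (basisE N d p)
      = if p = ⟨∅, (0 : Fin N →₀ ℕ)⟩ then 1 else 0 := by
  rw [Pi1, LinearMap.comp_apply, Module.Basis.coord_apply, Module.Basis.repr_self,
    Finsupp.single_apply]
  split_ifs <;> simp [LinearMap.toSpanSingleton_apply]

lemma master (lam : Module.Dual R Mo)
    (hlam : ∀ i : Fin N, lam (Pi.single i 1) = (X i : R) - C (d i)) :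
    (LinearMap.restrictScalars ℤ (Dl N lam)).comp (Hh N d)
      + (Hh N d).comp (LinearMap.restrictScalars ℤ (Dl N lam)) + Pi1 N d
      = LinearMap.id := by
  have hD : ∀ (T : Finset (Fin N)) (β : Fin N →₀ ℕ),
      Dl N lam (basisE N d ⟨T, β⟩)
        = ∑ j ∈ T, sgn N j T • basisE N d ⟨T.erase j, β + Finsupp.single j 1⟩ := by
    intro T β
    rw [basisE_apply, map_smul, Dl_epsF N d lam hlam, Finset.smul_sum]
    refine Finset.sum_congr rfl (fun j hj => ?_)
    rw [basisE_apply, smul_comm (Ypow N d β) (sgn N j T), smul_smul,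
      ← Ypow_single N d j, ← Ypow_add]
  apply (basisE N d).ext
  rintro ⟨S, α⟩
  simp only [LinearMap.add_apply, LinearMap.comp_apply, LinearMap.restrictScalars_apply,
    LinearMap.id_apply]
  by_cases hU : (α.support ∪ S).Nonempty
  · set i := (α.support ∪ S).min' hU with hidef
    have hiU : i ∈ α.support ∪ S := Finset.min'_mem _ _
    have hile : ∀ x ∈ α.support ∪ S, i ≤ x := fun x hx => Finset.min'_le _ x hx
    have hileS : ∀ x ∈ S, i ≤ x := fun x hx => hile x (Finset.mem_union_right _ hx)
    by_cases hiS : i ∈ S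
    · -- Case B : the minimum is an exterior index
      have hH0 : Hh N d (basisE N d ⟨S, α⟩) = 0 := by
        rw [Hh_basis, valH_of_min_mem N d hiU hile hiS]
      have key : ∀ j ∈ S, Hh N d (basisE N d ⟨S.erase j, α + Finsupp.single j 1⟩)
          = if j = i then basisE N d ⟨S, α⟩ else 0 := by
        intro j hj
        rw [Hh_basis]
        rcases eq_or_ne j i with rfl | hji
        · rw [if_pos rfl]
          have hi' : i ∈ (α + Finsupp.single i 1).support ∪ S.erase i :=
            Finset.mem_union_left _ (Finsupp.mem_support_iff.2 (by
              simp [Finsupp.add_apply, Finsupp.single_apply]))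
          have hall' : ∀ x ∈ (α + Finsupp.single i 1).support ∪ S.erase i, i ≤ x := by
            intro x hx
            rcases Finset.mem_union.1 hx with hx | hx
            · rcases Finset.mem_union.1 (support_add_single_subset N α i hx) with hx | hx
              · exact hile x (Finset.mem_union_left _ hx)
              · rw [Finset.mem_singleton.1 hx]
            · exact hileS x (Finset.mem_of_mem_erase hx)
          rw [valH_of_min_notmem N d hi' hall' (Finset.notMem_erase _ _),
            add_sub_single N α i, Finset.insert_erase hj, basisE_apply]
        · rw [if_neg hji]
          have hi' : i ∈ (α + Finsupp.single j 1).support ∪ S.erase j :=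
            Finset.mem_union_right _ (Finset.mem_erase.2 ⟨Ne.symm hji, hiS⟩)
          have hall' : ∀ x ∈ (α + Finsupp.single j 1).support ∪ S.erase j, i ≤ x := by
            intro x hx
            rcases Finset.mem_union.1 hx with hx | hx
            · rcases Finset.mem_union.1 (support_add_single_subset N α j hx) with hx | hx
              · exact hile x (Finset.mem_union_left _ hx)
              · rw [Finset.mem_singleton.1 hx]; exact hileS j hj
            · exact hileS x (Finset.mem_of_mem_erase hx)
          exact valH_of_min_mem N d hi' hall' (Finset.mem_erase.2 ⟨Ne.symm hji, hiS⟩)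
      have hsum : Hh N d (Dl N lam (basisE N d ⟨S, α⟩)) = basisE N d ⟨S, α⟩ := by
        rw [hD, map_sum]
        rw [Finset.sum_congr rfl (fun j hj => by rw [map_zsmul, key j hj])]
        rw [Finset.sum_eq_single i (fun j _ hj => by rw [if_neg hj, smul_zero])
          (fun h => absurd hiS h), if_pos rfl,
          sgn_eq_one N (fun x hx => not_lt.2 (hileS x hx)), one_smul]
      have hSne : S ≠ ∅ := Finset.ne_empty_of_mem hiS
      have hne2 : (⟨S, α⟩ : (_ : Finset (Fin N)) × (Fin N →₀ ℕ)) ≠ ⟨∅, 0⟩ :=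
        fun hh => hSne (congrArg Sigma.fst hh)
      rw [hH0, map_zero, hsum, Pi1_basis, if_neg hne2, zero_add, add_zero]
    · -- Case A : the minimum is a polynomial variable
      have hiA : i ∈ α.support := by
        rcases Finset.mem_union.1 hiU with h | h
        · exact h
        · exact absurd h hiS
      have hαi : α i ≠ 0 := Finsupp.mem_support_iff.1 hiA
      have hilt : ∀ x ∈ S, i < x := fun x hx =>
        lt_of_le_of_ne (hileS x hx) (fun h => hiS (h ▸ hx))
      have hHb : Hh N d (basisE N d ⟨S, α⟩)
          = basisE N d ⟨insert i S, α - Finsupp.single i 1⟩ := by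
        rw [Hh_basis, valH_of_min_notmem N d hiU hile hiS, basisE_apply]
      have hDH : Dl N lam (basisE N d ⟨insert i S, α - Finsupp.single i 1⟩)
          = basisE N d ⟨S, α⟩
            + ∑ j ∈ S, (-sgn N j S)
              • basisE N d ⟨insert i (S.erase j),
                  α - Finsupp.single i 1 + Finsupp.single j 1⟩ := by
        rw [hD, ← Finset.add_sum_erase _ _ (Finset.mem_insert_self i S)]
        congr 1
        · rw [Finset.erase_insert hiS, sub_add_single N hαi,
            sgn_eq_one N (fun x hx => ?_), one_smul]
          rcases Finset.mem_insert.1 hx with rfl | hx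
          · exact lt_irrefl _
          · exact not_lt.2 (hileS x hx)
        · rw [Finset.erase_insert hiS]
          refine Finset.sum_congr rfl (fun j hj => ?_)
          rw [sgn_insert N hiS (hilt j hj),
            Finset.erase_insert_of_ne (ne_of_lt (hilt j hj))]
      have key : ∀ j ∈ S, Hh N d (basisE N d ⟨S.erase j, α + Finsupp.single j 1⟩)
          = basisE N d ⟨insert i (S.erase j),
              α - Finsupp.single i 1 + Finsupp.single j 1⟩ := by
        intro j hj
        have hij : i ≠ j := ne_of_lt (hilt j hj)
        have hi' : i ∈ (α + Finsupp.single j 1).support ∪ S.erase j :=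
          Finset.mem_union_left _ (Finsupp.mem_support_iff.2 (by
            simp only [Finsupp.add_apply, Finsupp.single_apply, if_neg hij]
            omega))
        have hall' : ∀ x ∈ (α + Finsupp.single j 1).support ∪ S.erase j, i ≤ x := by
          intro x hx
          rcases Finset.mem_union.1 hx with hx | hx
          · rcases Finset.mem_union.1 (support_add_single_subset N α j hx) with hx | hx
            · exact hile x (Finset.mem_union_left _ hx)
            · rw [Finset.mem_singleton.1 hx]; exact le_of_lt (hilt j hj)
          · exact hileS x (Finset.mem_of_mem_erase hx)
        have hiS' : i ∉ S.erase j := fun hh => hiS (Finset.mem_of_mem_erase hh)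
        rw [Hh_basis, valH_of_min_notmem N d hi' hall' hiS', add_sub_comm' N hij,
          basisE_apply]
      have hsum : Hh N d (Dl N lam (basisE N d ⟨S, α⟩))
          = ∑ j ∈ S, sgn N j S
              • basisE N d ⟨insert i (S.erase j),
                  α - Finsupp.single i 1 + Finsupp.single j 1⟩ := by
        rw [hD, map_sum]
        exact Finset.sum_congr rfl (fun j hj => by rw [map_zsmul, key j hj])
      have hα0 : α ≠ 0 := fun h => hαi (by rw [h]; rfl)
      have hne2 : (⟨S, α⟩ : (_ : Finset (Fin N)) × (Fin N →₀ ℕ)) ≠ ⟨∅, 0⟩ :=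
        fun hh => hα0 (eq_of_heq (Sigma.mk.inj_iff.1 hh).2)
      have hcancel : (∑ j ∈ S, (-sgn N j S)
            • basisE N d ⟨insert i (S.erase j),
                α - Finsupp.single i 1 + Finsupp.single j 1⟩)
          + ∑ j ∈ S, sgn N j S
            • basisE N d ⟨insert i (S.erase j),
                α - Finsupp.single i 1 + Finsupp.single j 1⟩ = 0 := by
        rw [← Finset.sum_add_distrib]
        refine Finset.sum_eq_zero (fun j hj => ?_)
        rw [neg_smul, neg_add_cancel]
      rw [hHb, hDH, hsum, Pi1_basis, if_neg hne2, add_zero, add_assoc, hcancel, add_zero]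
  · -- Case C : everything empty
    rw [Finset.not_nonempty_iff_eq_empty, Finset.union_eq_empty] at hU
    obtain ⟨hαsupp, hS⟩ := hU
    have hα0 : α = 0 := Finsupp.support_eq_empty.1 hαsupp
    subst hα0; subst hS
    have hH0 : Hh N d (basisE N d ⟨∅, 0⟩) = 0 := by
      rw [Hh_basis, valH_of_empty]
      simp
    have hD0 : Dl N lam (basisE N d ⟨∅, 0⟩) = 0 := by
      rw [hD]; simp
    rw [hH0, map_zero, hD0, map_zero, Pi1_basis, if_pos rfl]
    have hb1 : basisE N d ⟨∅, (0 : Fin N →₀ ℕ)⟩ = 1 := by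
      rw [basisE_apply, Ypow_zero, epsF_empty, one_smul]
    rw [hb1]
    simp

end KoszulAux
end

/-- Exactness of the Koszul complex of the regular sequence `Xᵢ − dᵢ` in
`R = ℤ[X₀, …, X_{N−1}]`: for the left contraction `δ` by the linear functional
`λ(eᵢ) = Xᵢ − dᵢ` on the exterior algebra of the free module `Fin N → R`,
the kernel of `δ` is the sum of the range of `δ` and the span of `1`. -/
theorem koszul_contraction_exact (N : ℕ) (d : Fin N → ℤ)
    (lam : Module.Dual (MvPolynomial (Fin N) ℤ) (Fin N → MvPolynomial (Fin N) ℤ))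
    (hlam : ∀ i : Fin N, lam (Pi.single i 1) = (X i : MvPolynomial (Fin N) ℤ) - C (d i))
    (δ : ExteriorAlgebra (MvPolynomial (Fin N) ℤ) (Fin N → MvPolynomial (Fin N) ℤ)
      →ₗ[MvPolynomial (Fin N) ℤ]
        ExteriorAlgebra (MvPolynomial (Fin N) ℤ) (Fin N → MvPolynomial (Fin N) ℤ))
    (hδ : δ = CliffordAlgebra.contractLeft (Q := (0 : QuadraticForm (MvPolynomial (Fin N) ℤ)
        (Fin N → MvPolynomial (Fin N) ℤ))) lam) :
    LinearMap.ker δ = LinearMap.range δ ⊔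
      Submodule.span (MvPolynomial (Fin N) ℤ)
        {(1 : ExteriorAlgebra (MvPolynomial (Fin N) ℤ) (Fin N → MvPolynomial (Fin N) ℤ))} := by
  subst hδ
  show LinearMap.ker (KoszulAux.Dl N lam) = LinearMap.range (KoszulAux.Dl N lam) ⊔ _
  apply le_antisymm
  · intro ω hω
    have hω0 : KoszulAux.Dl N lam ω = 0 := LinearMap.mem_ker.1 hω
    have hx := LinearMap.congr_fun (KoszulAux.master N d lam hlam) ω
    simp only [LinearMap.add_apply, LinearMap.comp_apply, LinearMap.restrictScalars_apply,
      LinearMap.id_apply] at hx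
    rw [hω0, map_zero, add_zero] at hx
    rw [← hx]
    refine Submodule.add_mem_sup (LinearMap.mem_range_self _ _) ?_
    have : KoszulAux.Pi1 N d ω
        = ((KoszulAux.basisE N d).coord ⟨∅, 0⟩ ω) • (1 :
            ExteriorAlgebra (MvPolynomial (Fin N) ℤ) (Fin N → MvPolynomial (Fin N) ℤ)) := rfl
    rw [this]
    rw [Submodule.mem_span_singleton]
    exact ⟨algebraMap ℤ _ ((KoszulAux.basisE N d).coord ⟨∅, 0⟩ ω), algebraMap_smul _ _ _⟩
  · refine sup_le ?_ ?_
    · rintro x ⟨y, rfl⟩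
      exact LinearMap.mem_ker.2 (CliffordAlgebra.contractLeft_contractLeft _ _)
    · rw [Submodule.span_le]
      intro x hx
      rw [Set.mem_singleton_iff] at hx
      subst hx
      exact LinearMap.mem_ker.2 (CliffordAlgebra.contractLeft_one _ _)
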